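/- Let P ∈ [0,1], v_d ∈ [0,1], p* > 0, and set V_∞ := (P + p*·v_d)/(P + (1−P)² + p*). Then |V_∞ − v_d| ≤ 2/p*. Consequently, if z is a random variable on a probability space and P = P(z) is measurable with values in [0,1], so that V_∞(z) = (P(z) + p* v_d)/(P(z) + (1−P(z))² + p*), then Var(V_∞(z)) ≤ E[(V_∞(z) − v_d)²] ≤ 4/(p*)². -/

import Mathlib

open MeasureTheory ProbabilityTheory

lemma key_bound (vd pstar : ℝ) (hvd : vd ∈ Set.Icc (0:ℝ) 1) (hp : 0 < pstar)
    (P : ℝ) (hP : P ∈ Set.Icc (0:ℝ) 1) :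
    |(P + pstar * vd) / (P + (1 - P) ^ 2 + pstar) - vd| ≤ 2 / pstar := by
  obtain ⟨hP0, hP1⟩ := hP
  obtain ⟨hv0, hv1⟩ := hvd
  have hd : 0 < P + (1 - P) ^ 2 + pstar := by nlinarith [sq_nonneg (1 - P)]
  have hrw : (P + pstar * vd) / (P + (1 - P) ^ 2 + pstar) - vd
      = (P - vd * (P + (1 - P) ^ 2)) / (P + (1 - P) ^ 2 + pstar) := by
    field_simp
    ring
  rw [hrw, abs_div, abs_of_pos hd]
  have hnum : |P - vd * (P + (1 - P) ^ 2)| ≤ 2 := by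
    rw [abs_le]
    constructor <;> nlinarith [sq_nonneg (1 - P), mul_nonneg hv0 hP0]
  have hden : pstar ≤ P + (1 - P) ^ 2 + pstar := by nlinarith [sq_nonneg (1 - P)]
  exact div_le_div₀ (by norm_num) hnum hp hden

theorem controlled_equilibrium_speed_variance_bound
    {Ω : Type*} [MeasurableSpace Ω] (μ : Measure Ω) [IsProbabilityMeasure μ]
    (P vd pstar : ℝ) (hP : P ∈ Set.Icc (0:ℝ) 1) (hvd : vd ∈ Set.Icc (0:ℝ) 1)
    (hp : 0 < pstar)
    (Pz : Ω → ℝ) (hPz : Measurable Pz) (hPz01 : ∀ ω, Pz ω ∈ Set.Icc (0:ℝ) 1) :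
    |(P + pstar * vd) / (P + (1 - P) ^ 2 + pstar) - vd| ≤ 2 / pstar ∧
    variance (fun ω => (Pz ω + pstar * vd) / (Pz ω + (1 - Pz ω) ^ 2 + pstar)) μ
      ≤ ∫ ω, ((Pz ω + pstar * vd) / (Pz ω + (1 - Pz ω) ^ 2 + pstar) - vd) ^ 2 ∂μ ∧
    ∫ ω, ((Pz ω + pstar * vd) / (Pz ω + (1 - Pz ω) ^ 2 + pstar) - vd) ^ 2 ∂μ
      ≤ 4 / pstar ^ 2 := by
  set X : Ω → ℝ := fun ω => (Pz ω + pstar * vd) / (Pz ω + (1 - Pz ω) ^ 2 + pstar) with hX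
  have hXmeas : Measurable X := by
    apply Measurable.div
    · exact hPz.add measurable_const
    · exact (hPz.add ((measurable_const.sub hPz).pow measurable_const)).add measurable_const
  have hXbound : ∀ ω, |X ω - vd| ≤ 2 / pstar := fun ω =>
    key_bound vd pstar hvd hp (Pz ω) (hPz01 ω)
  have hXabs : ∀ ω, |X ω| ≤ 2 / pstar + 1 := by
    intro ω
    have habs_vd : |vd| ≤ 1 := by
      rw [abs_le]; exact ⟨by linarith [hvd.1], hvd.2⟩
    calc |X ω| = |(X ω - vd) + vd| := by ring_nf
      _ ≤ |X ω - vd| + |vd| := abs_add_le _ _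
      _ ≤ 2 / pstar + 1 := add_le_add (hXbound ω) habs_vd
  have hXmem : MemLp X 2 μ := by
    refine (memLp_top_of_bound hXmeas.aestronglyMeasurable (2 / pstar + 1)
      (Filter.Eventually.of_forall hXabs)).mono_exponent le_top
  have hint1 : Integrable X μ := hXmem.integrable one_le_two
  have hint2 : Integrable (fun ω => X ω ^ 2) μ := hXmem.integrable_sq
  have hintsq : Integrable (fun ω => (X ω - vd) ^ 2) μ :=
    (hXmem.sub (memLp_const vd)).integrable_sq
  refine ⟨key_bound vd pstar hvd hp P hP, ?_, ?_⟩
  · have hvar : variance X μ = (∫ ω, X ω ^ 2 ∂μ) - (∫ ω, X ω ∂μ) ^ 2 := by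
      simpa using variance_eq_sub hXmem
    have hexp : ∫ ω, (X ω - vd) ^ 2 ∂μ
        = (∫ ω, X ω ^ 2 ∂μ) - 2 * vd * (∫ ω, X ω ∂μ) + vd ^ 2 := by
      have : ∀ ω, (X ω - vd) ^ 2 = X ω ^ 2 - 2 * vd * X ω + vd ^ 2 := fun ω => by ring
      simp_rw [this]
      have hA : Integrable (fun ω => X ω ^ 2 - 2 * vd * X ω) μ :=
        hint2.sub (hint1.const_mul (2 * vd))
      rw [integral_add hA (integrable_const _),
        integral_sub hint2 (hint1.const_mul (2 * vd)), integral_const_mul, integral_const]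
      simp
    rw [hvar, hexp]
    nlinarith [sq_nonneg ((∫ ω, X ω ∂μ) - vd)]
  · have hle : ∀ ω, (X ω - vd) ^ 2 ≤ 4 / pstar ^ 2 := by
      intro ω
      have := hXbound ω
      have h2 : (X ω - vd) ^ 2 ≤ (2 / pstar) ^ 2 := by
        rw [← sq_abs]
        exact pow_le_pow_left₀ (abs_nonneg _) this 2
      calc (X ω - vd) ^ 2 ≤ (2 / pstar) ^ 2 := h2
        _ = 4 / pstar ^ 2 := by rw [div_pow]; norm_num
    calc ∫ ω, (X ω - vd) ^ 2 ∂μ ≤ ∫ _, 4 / pstar ^ 2 ∂μ :=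
          integral_mono hintsq (integrable_const _) hle
      _ = 4 / pstar ^ 2 := by simp
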